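/- Let f = [a_1,...,a_n] be an affine permutation in the affine symmetric group S̃_n (so the a_i are pairwise incongruent mod n and sum to n(n+1)/2). Then for every i, a_i = i − Σ_{i<p≤n} ⌊(a_p − a_i)/n⌋ + Σ_{1≤p<i} ⌊(a_i − a_p)/n⌋. -/

import Mathlib

open Finset

theorem affine_window_formula (n : ℕ) (hn : 1 ≤ n) (a : ℕ → ℤ)
    (hincong : ∀ i j, 1 ≤ i → i < j → j ≤ n → ¬ ((n : ℤ) ∣ (a i - a j)))
    (hsum : 2 * ∑ i ∈ Finset.Icc 1 n, a i = (n : ℤ) * ((n : ℤ) + 1)) :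
    ∀ i, 1 ≤ i → i ≤ n →
      a i = (i : ℤ) - (∑ p ∈ Finset.Ioc i n, Int.fdiv (a p - a i) (n : ℤ))
              + ∑ p ∈ Finset.Ico 1 i, Int.fdiv (a i - a p) (n : ℤ) := by
  intro i hi1 hin
  have hn0 : (0:ℤ) < n := by exact_mod_cast hn
  -- symmetric incongruence
  have hinc : ∀ p, 1 ≤ p → p ≤ n → p ≠ i → ¬ ((n:ℤ) ∣ (a p - a i)) := by
    intro p h1 h2 hpi hd
    rcases lt_or_gt_of_ne hpi with h | h
    · exact hincong p i h1 h hin hd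
    · exact hincong i p hi1 h h2 (by
        have := dvd_neg.mpr hd; simpa using this)
  set s : Finset ℕ := (Finset.Icc 1 n).erase i with hs
  have hmem : ∀ p, p ∈ s ↔ (1 ≤ p ∧ p ≤ n ∧ p ≠ i) := by
    intro p; simp [hs, Finset.mem_erase, Finset.mem_Icc]; tauto
  -- residues are nonzero and distinct
  have hres : ∀ p ∈ s, 0 < (a p - a i) % (n:ℤ) ∧ (a p - a i) % (n:ℤ) < n := by
    intro p hp
    rw [hmem] at hp
    have h1 := Int.emod_nonneg (a p - a i) (ne_of_gt hn0)
    have h2 := Int.emod_lt_of_pos (a p - a i) hn0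
    have h3 : (a p - a i) % (n:ℤ) ≠ 0 := by
      intro h
      exact hinc p hp.1 hp.2.1 hp.2.2 (Int.dvd_of_emod_eq_zero h)
    constructor
    · omega
    · exact h2
  have hinj : ∀ x ∈ s, ∀ y ∈ s, ((a x - a i) % (n:ℤ)).toNat = ((a y - a i) % (n:ℤ)).toNat → x = y := by
    intro x hx y hy hxy
    by_contra hne
    have hxr := hres x hx
    have hyr := hres y hy
    have heq : (a x - a i) % (n:ℤ) = (a y - a i) % (n:ℤ) := by omega
    have hmod : (n:ℤ) ∣ (a x - a y) := by
      have : (a x - a i) ≡ (a y - a i) [ZMOD n] := heq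
      have := this.dvd
      have h2 : a y - a i - (a x - a i) = a y - a x := by ring
      rw [h2] at this
      simpa using (dvd_neg.mpr this)
    rw [hmem] at hx hy
    rcases lt_or_gt_of_ne hne with h | h
    · exact hincong x y hx.1 h hy.2.1 hmod
    · exact hincong y x hy.1 h hx.2.1 (by simpa using dvd_neg.mpr hmod)
  -- the image of the residue map is exactly Ico 1 n in ℕ
  have himg : s.image (fun p => ((a p - a i) % (n:ℤ)).toNat) = Finset.Ico 1 n := by
    apply Finset.eq_of_subset_of_card_le
    · intro x hx
      simp only [Finset.mem_image] at hx
      obtain ⟨p, hp, rfl⟩ := hx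
      have := hres p hp
      simp only [Finset.mem_Ico]
      omega
    · rw [Finset.card_image_of_injOn hinj]
      have hcs : s.card = n - 1 := by
        rw [hs, Finset.card_erase_of_mem (by simp [Finset.mem_Icc]; omega), Nat.card_Icc]
        omega
      rw [hcs, Nat.card_Ico]
  -- sum of residues
  have hressum : ∑ p ∈ s, (a p - a i) % (n:ℤ) = ∑ k ∈ Finset.Ico 1 n, (k:ℤ) := by
    rw [← himg, Finset.sum_image hinj]
    apply Finset.sum_congr rfl
    intro p hp
    have := hres p hp
    omega
  -- Gauss sum
  have hgauss : 2 * ∑ k ∈ Finset.Ico 1 n, (k:ℤ) = (n:ℤ) * ((n:ℤ) - 1) := by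
    have h1 : ∑ k ∈ Finset.Ico 1 n, (k:ℤ) = ((∑ k ∈ Finset.range n, k : ℕ) : ℤ) := by
      push_cast
      rw [Finset.range_eq_Ico, ← Finset.sum_Ico_consecutive (fun k : ℕ => (k:ℤ)) (by omega : 0 ≤ 1) (by omega : 1 ≤ n)]
      simp
    rw [h1]
    have := Finset.sum_range_id_mul_two n
    have h2 : ((∑ k ∈ Finset.range n, k : ℕ) : ℤ) * 2 = (n:ℤ) * ((n:ℤ) - 1) := by
      rw [← Nat.cast_ofNat, ← Nat.cast_mul, this]
      push_cast [Nat.cast_sub hn]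
      ring
    linarith
  -- sum of differences
  have hdiff : ∑ p ∈ s, (a p - a i) = (∑ p ∈ Finset.Icc 1 n, a p) - (n:ℤ) * a i := by
    rw [Finset.sum_sub_distrib, Finset.sum_const]
    have hcs : s.card = n - 1 := by
      rw [hs, Finset.card_erase_of_mem (by simp [Finset.mem_Icc]; omega), Nat.card_Icc]
      omega
    have hsplit : ∑ p ∈ s, a p = (∑ p ∈ Finset.Icc 1 n, a p) - a i := by
      rw [hs]
      rw [Finset.sum_erase_eq_sub (by simp [Finset.mem_Icc]; omega)]
    rw [hsplit, hcs, nsmul_eq_mul]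
    push_cast [Nat.cast_sub hn]
    ring
  -- total quotient sum
  have hQ : ∑ p ∈ s, (a p - a i) / (n:ℤ) = 1 - a i := by
    have hkey : ∀ p ∈ s, (n:ℤ) * ((a p - a i) / (n:ℤ)) + (a p - a i) % (n:ℤ) = a p - a i :=
      fun p _ => Int.mul_ediv_add_emod _ _
    have hsumkey := Finset.sum_congr rfl hkey
    rw [Finset.sum_add_distrib, ← Finset.mul_sum] at hsumkey
    rw [hressum, hdiff] at hsumkey
    have h2n : 2 * ((n:ℤ) * ∑ p ∈ s, (a p - a i) / (n:ℤ)) = 2 * ((n:ℤ) * (1 - a i)) := by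
      have := hgauss
      nlinarith [hsumkey, hsum, hgauss]
    have := mul_left_cancel₀ (by positivity : (2 * (n:ℤ)) ≠ 0) (by linarith [h2n] : 2 * (n:ℤ) * (∑ p ∈ s, (a p - a i) / (n:ℤ)) = 2 * (n:ℤ) * (1 - a i))
    exact this
  -- split s
  have hsplit : s = Finset.Ico 1 i ∪ Finset.Ioc i n := by
    ext p
    rw [hmem]
    simp only [Finset.mem_union, Finset.mem_Ico, Finset.mem_Ioc]
    omega
  have hdisj : Disjoint (Finset.Ico 1 i) (Finset.Ioc i n) := by
    rw [Finset.disjoint_left]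
    intro p hp hq
    simp only [Finset.mem_Ico] at hp
    simp only [Finset.mem_Ioc] at hq
    omega
  have hQ2 : (∑ p ∈ Finset.Ico 1 i, (a p - a i) / (n:ℤ)) + (∑ p ∈ Finset.Ioc i n, (a p - a i) / (n:ℤ)) = 1 - a i := by
    rw [← Finset.sum_union hdisj, ← hsplit, hQ]
  -- negation formula for p < i
  have hneg : ∀ p ∈ Finset.Ico 1 i, (a i - a p) / (n:ℤ) = -1 - (a p - a i) / (n:ℤ) := by
    intro p hp
    simp only [Finset.mem_Ico] at hp
    have hps : p ∈ s := by rw [hmem]; omega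
    have hr := hres p hps
    have hd := Int.mul_ediv_add_emod (a p - a i) (n:ℤ)
    have := (Int.ediv_emod_unique hn0 (a := a i - a p) (b := (n:ℤ))
      (q := -1 - (a p - a i) / (n:ℤ)) (r := (n:ℤ) - (a p - a i) % (n:ℤ))).mpr
      ⟨by linarith, by omega, by omega⟩
    exact this.1
  -- finish
  simp only [Int.fdiv_eq_ediv_of_nonneg _ (le_of_lt hn0)]
  have hsum2 : ∑ p ∈ Finset.Ico 1 i, (a i - a p) / (n:ℤ)
      = -(((Finset.Ico 1 i).card : ℤ)) - ∑ p ∈ Finset.Ico 1 i, (a p - a i) / (n:ℤ) := by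
    rw [Finset.sum_congr rfl hneg, Finset.sum_sub_distrib, Finset.sum_const]
    ring
  rw [hsum2, Nat.card_Ico]
  have : ((i - 1 : ℕ) : ℤ) = (i:ℤ) - 1 := by push_cast [Nat.cast_sub hi1]; ring
  rw [this]
  linarith [hQ2]
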